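/- Let (X,σ) be a binary subshift. Then (X,σ) is non-tame if and only if the pair (A₀,A₁) admits an infinite independence set, where A₀ = {(x_n) ∈ X : x₁ = 0} is the 0-cylinder and A₁ = {(x_n) ∈ X : x₁ = 1} is the 1-cylinder. -/

import Mathlib

open Filter Topology

noncomputable section

abbrev BinSeq : Type := ℕ → Bool

/-- The left shift on `{0,1}^ℕ`. -/
def binShift (x : BinSeq) : BinSeq := fun n => x (n + 1)

/-- A binary subshift: a nonempty closed shift-invariant subset of `{0,1}^ℕ`. -/
structure BinarySubshift where
  carrier : Set BinSeq
  nonempty : carrier.Nonempty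
  isClosed : IsClosed carrier
  shift_mem : ∀ x ∈ carrier, binShift x ∈ carrier

namespace BinarySubshift

variable (X : BinarySubshift)

/-- The shift map restricted to the subshift. -/
def S : X.carrier → X.carrier := fun x => ⟨binShift x, X.shift_mem x x.2⟩

/-- The (forward) Ellis semigroup `E(X)`: the closure of `{σⁿ : n ≥ 1}` in `X^X`. -/
def Ellis : Set (X.carrier → X.carrier) := closure (Set.range fun n : ℕ => X.S^[n + 1])

/-- `(X,σ)` is non-tame if `|E(X)| > 2^ℵ₀`. -/
def NonTame : Prop := Cardinal.continuum < Cardinal.mk ↥X.Ellis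

end BinarySubshift

/-- `𝒯` is a choice domain: for all `m, n`, any `n` distinct points of `𝒯` and any
choice functions `φ¹,…,φⁿ ∈ {0,1}^m` there are times `m < τ₁ < … < τ_m` realising
the prescribed values. -/
def IsChoiceDomain (𝒯 : Set BinSeq) : Prop :=
  ∀ (m n : ℕ) (x : Fin n → BinSeq), (∀ i, x i ∈ 𝒯) → Function.Injective x →
    ∀ φ : Fin n → Fin m → Bool, ∃ τ : Fin m → ℕ,
      StrictMono τ ∧ (∀ k, m < τ k) ∧ ∀ i k, x i (τ k) = φ i k

/-- `J` is an independence set for the pair `(A0, A1)` in `C`. -/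
def IsIndependenceSet (C A0 A1 : Set BinSeq) (J : Set ℕ) : Prop :=
  ∀ I : Finset ℕ, ↑I ⊆ J → ∀ φ : ℕ → Bool, ∃ x ∈ C, ∀ i ∈ I,
    binShift^[i] x ∈ (if φ i = true then A1 else A0)


set_option linter.unusedSectionVars false
set_option maxHeartbeats 1000000


section PCount
variable {Y : Type} [TopologicalSpace Y]

/-- An enumerated topological basis. -/
def IsBasisEnum (B : ℕ → Set Y) : Prop :=
  (∀ k, IsOpen (B k)) ∧ ∀ U : Set Y, IsOpen U → ∀ x ∈ U, ∃ k, x ∈ B k ∧ B k ⊆ U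

theorem exists_basisEnum [SecondCountableTopology Y] :
    ∃ B : ℕ → Set Y, IsBasisEnum B := by
  have hc : (insert (∅ : Set Y) (TopologicalSpace.countableBasis Y)).Countable :=
    (TopologicalSpace.countable_countableBasis Y).insert _
  obtain ⟨B, hB⟩ := hc.exists_eq_range (Set.insert_nonempty _ _)
  refine ⟨B, fun k => ?_, fun U hU x hx => ?_⟩
  · have : B k ∈ insert (∅ : Set Y) (TopologicalSpace.countableBasis Y) := by
      rw [hB]; exact Set.mem_range_self k
    rcases this with h | h
    · simp [h]
    · exact (TopologicalSpace.isBasis_countableBasis Y).isOpen h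
  · obtain ⟨t, ht, hxt, htU⟩ :=
      (TopologicalSpace.isBasis_countableBasis Y).exists_subset_of_mem_open hx hU
    have : t ∈ Set.range B := by rw [← hB]; exact Set.mem_insert_of_mem _ ht
    obtain ⟨k, rfl⟩ := this
    exact ⟨k, hxt, htU⟩

variable (B : ℕ → Set Y)

/-- `g` is constant on `B k ∩ F`. -/
def ConstOn (g : Y → Bool) (F : Set Y) (k : ℕ) : Prop :=
  ∀ x ∈ B k ∩ F, ∀ y ∈ B k ∩ F, g x = g y

/-- Remove from `F` all basic pieces on which `g` is constant. -/
def bderiv (g : Y → Bool) (F : Set Y) : Set Y :=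
  F \ ⋃ (k : ℕ) (_ : ConstOn B g F k), B k

/-- Property (P): on each nonempty closed set there is a relatively open
nonempty piece on which `g` is constant. -/
def PProp (g : Y → Bool) : Prop :=
  ∀ F : Set Y, IsClosed F → F.Nonempty → ∃ k, (B k ∩ F).Nonempty ∧ ConstOn B g F k

noncomputable def bstage (g : Y → Bool) (α : Ordinal.{0}) : Set Y :=
  ⋂ (β : Set.Iio α), bderiv B g (bstage g β.1)
termination_by α
decreasing_by exact β.2

theorem bstage_eq (g : Y → Bool) (α : Ordinal.{0}) :
    bstage B g α = ⋂ (β : Set.Iio α), bderiv B g (bstage B g β.1) := by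
  rw [bstage]

theorem bstage_antitone (g : Y → Bool) : Antitone (bstage B g) := by
  intro α α' h
  rw [bstage_eq, bstage_eq]
  exact Set.iInter_mono' fun β => ⟨⟨β.1, lt_of_lt_of_le β.2 h⟩, le_refl _⟩

theorem deriv_subset (g : Y → Bool) (F : Set Y) : bderiv B g F ⊆ F := Set.diff_subset

theorem bstage_succ (g : Y → Bool) (α : Ordinal.{0}) :
    bstage B g (α + 1) = bderiv B g (bstage B g α) := by
  apply Set.Subset.antisymm
  · rw [bstage_eq]
    exact Set.iInter_subset_of_subset ⟨α, lt_add_one α⟩ (le_refl _)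
  · rw [bstage_eq (α := α + 1)]
    refine Set.subset_iInter fun β => ?_
    have hle : β.1 ≤ α := by
      have h2 : β.1 < α + 1 := β.2
      exact Order.lt_add_one_iff.mp h2
    rcases lt_or_eq_of_le hle with h | h
    · exact (deriv_subset B g _).trans (by
        rw [bstage_eq (B := B) (g := g) (α := α)]
        exact Set.iInter_subset _ (⟨β.1, h⟩ : Set.Iio α))
    · rw [h]


theorem bderiv_isClosed (g : Y → Bool) (F : Set Y) (hB : ∀ k, IsOpen (B k))
    (hF : IsClosed F) : IsClosed (bderiv B g F) := by
  have : bderiv B g F = F ∩ (⋃ (k : ℕ) (_ : ConstOn B g F k), B k)ᶜ := rfl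
  rw [this, ← Set.diff_eq]
  exact hF.sdiff (isOpen_iUnion fun k => isOpen_iUnion fun _ => hB k)

theorem bstage_isClosed (g : Y → Bool) (hB : ∀ k, IsOpen (B k)) (α : Ordinal.{0}) :
    IsClosed (bstage B g α) := by
  induction α using Ordinal.induction with
  | h α IH =>
    rw [bstage_eq]
    exact isClosed_iInter fun β => bderiv_isClosed B g _ hB (IH β.1 β.2)

/-- The least index of a constancy window on `bstage g α`. -/
noncomputable def jIdx (g : Y → Bool) (α : Ordinal.{0}) : ℕ :=
  Classical.epsilon fun k => (B k ∩ bstage B g α).Nonempty ∧ ConstOn B g (bstage B g α) k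

theorem jIdx_spec {g : Y → Bool} (hP : PProp B g) (hB : ∀ k, IsOpen (B k)) {α : Ordinal.{0}}
    (hne : (bstage B g α).Nonempty) :
    (B (jIdx B g α) ∩ bstage B g α).Nonempty ∧ ConstOn B g (bstage B g α) (jIdx B g α) :=
  Classical.epsilon_spec (hP _ (bstage_isClosed B g hB α) hne)

theorem bderiv_inter_empty {g : Y → Bool} {F : Set Y} {k : ℕ} (hk : ConstOn B g F k) :
    B k ∩ bderiv B g F = ∅ := by
  ext x
  simp only [Set.mem_inter_iff, Set.mem_empty_iff_false, iff_false]
  rintro ⟨hx1, hx2⟩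
  exact hx2.2 (Set.mem_biUnion hk hx1)

theorem jIdx_inter_succ_empty {g : Y → Bool} (hP : PProp B g) (hB : ∀ k, IsOpen (B k))
    {α : Ordinal.{0}} (hne : (bstage B g α).Nonempty) :
    B (jIdx B g α) ∩ bstage B g (α + 1) = ∅ := by
  rw [bstage_succ]
  exact bderiv_inter_empty B (jIdx_spec B hP hB hne).2

theorem jIdx_injOn {g : Y → Bool} (hP : PProp B g) (hB : ∀ k, IsOpen (B k))
    {α α' : Ordinal.{0}} (hne : (bstage B g α).Nonempty) (hne' : (bstage B g α').Nonempty)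
    (hlt : α < α') : jIdx B g α ≠ jIdx B g α' := by
  intro heq
  have h1 : B (jIdx B g α) ∩ bstage B g α' = ∅ := by
    have hsub : bstage B g α' ⊆ bstage B g (α + 1) :=
      bstage_antitone B g (Order.add_one_le_iff.mpr hlt)
    have := jIdx_inter_succ_empty B hP hB hne
    exact Set.eq_empty_of_subset_empty (this ▸ Set.inter_subset_inter_right _ hsub)
  have h2 := (jIdx_spec B hP hB hne').1
  rw [← heq] at h2
  rw [h1] at h2
  exact Set.not_nonempty_empty h2

theorem exists_bstage_empty {g : Y → Bool} (hP : PProp B g) (hB : ∀ k, IsOpen (B k)) :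
    ∃ θ : Ordinal.{0}, bstage B g θ = ∅ := by
  by_contra hcon
  push_neg at hcon
  have hne : ∀ α, (bstage B g α).Nonempty := hcon
  set o : Ordinal.{0} := (Cardinal.aleph 1).ord with ho
  have hinj : Function.Injective fun β : Set.Iio o => ULift.up.{1} (jIdx B g β.1) := by
    intro β β' h
    rcases lt_trichotomy β.1 β'.1 with hlt | heq | hlt
    · exact absurd (congrArg ULift.down h) (jIdx_injOn B hP hB (hne _) (hne _) hlt)
    · exact Subtype.ext heq
    · exact absurd (congrArg ULift.down h).symm (jIdx_injOn B hP hB (hne _) (hne _) hlt)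
  have hle := Cardinal.mk_le_of_injective hinj
  rw [Ordinal.mk_Iio_ordinal, Cardinal.mk_uLift, Cardinal.mk_nat, Cardinal.card_ord] at hle
  exact absurd (Cardinal.lift_le.mp hle) (Cardinal.aleph0_lt_aleph_one).not_ge

theorem exists_exit {g : Y → Bool} (hP : PProp B g) (hB : ∀ k, IsOpen (B k)) (x : Y) :
    ∃ α : Ordinal.{0}, x ∈ bstage B g α ∧ x ∉ bstage B g (α + 1) := by
  by_contra hcon
  push_neg at hcon
  obtain ⟨θ, hθ⟩ := exists_bstage_empty B hP hB
  have : ∀ α, x ∈ bstage B g α := by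
    intro α
    induction α using Ordinal.induction with
    | h α IH =>
      rw [bstage_eq]
      refine Set.mem_iInter.mpr fun β => ?_
      have := hcon β.1 (IH β.1 β.2)
      rwa [bstage_succ] at this
  exact absurd (hθ ▸ this θ) (Set.notMem_empty x)


def Cset (g : Y → Bool) (α : Ordinal.{0}) : Set ℕ :=
  {k | (B k ∩ bstage B g α).Nonempty}

def Kset (g : Y → Bool) (α : Ordinal.{0}) : Set ℕ :=
  {k | ConstOn B g (bstage B g α) k ∧ (B k ∩ bstage B g α).Nonempty ∧
    ∀ x ∈ B k ∩ bstage B g α, g x = true}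

def IsJump (g : Y → Bool) (α : Ordinal.{0}) : Prop :=
  bstage B g (α + 1) ≠ bstage B g α

def codeOf (g : Y → Bool) : Set (Set ℕ × Set ℕ) :=
  (fun α => (Cset B g α, Kset B g α)) '' {α | IsJump B g α}

theorem mem_closed_iff (hBE : IsBasisEnum B) {F : Set Y} (hF : IsClosed F) (x : Y) :
    x ∈ F ↔ ∀ k, x ∈ B k → (B k ∩ F).Nonempty := by
  constructor
  · exact fun hx k hk => ⟨x, hk, hx⟩
  · intro h
    by_contra hx
    obtain ⟨k, hk1, hk2⟩ := hBE.2 Fᶜ hF.isOpen_compl x hx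
    obtain ⟨y, hy1, hy2⟩ := h k hk1
    exact hk2 hy1 hy2

theorem closed_eq_of_windows (hBE : IsBasisEnum B) {F F' : Set Y} (hF : IsClosed F)
    (hF' : IsClosed F')
    (h : {k | (B k ∩ F).Nonempty} = {k | (B k ∩ F').Nonempty}) : F = F' := by
  ext x
  rw [mem_closed_iff B hBE hF, mem_closed_iff B hBE hF']
  constructor
  · intro hx k hk
    exact (Set.ext_iff.mp h k).mp (hx k hk)
  · intro hx k hk
    exact (Set.ext_iff.mp h k).mpr (hx k hk)

theorem jump_stage_nonempty {g : Y → Bool} {α : Ordinal.{0}} (h : IsJump B g α) :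
    (bstage B g α).Nonempty := by
  rcases Set.eq_empty_or_nonempty (bstage B g α) with he | hne
  · exact absurd (Set.eq_empty_of_subset_empty
      (he ▸ bstage_antitone B g (le_of_lt (lt_add_one α))) ▸ he ▸ rfl) h
  · exact hne

theorem jump_eq_of_Cset (hBE : IsBasisEnum B) {g : Y → Bool} {β β' : Ordinal.{0}}
    (hj : IsJump B g β) (hj' : IsJump B g β') (h : Cset B g β = Cset B g β') : β = β' := by
  have hstage : bstage B g β = bstage B g β' :=
    closed_eq_of_windows B hBE (bstage_isClosed B g hBE.1 β) (bstage_isClosed B g hBE.1 β') h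
  by_contra hne
  rcases lt_or_gt_of_ne hne with hlt | hlt
  · have h1 : bstage B g β' ⊆ bstage B g (β + 1) :=
      bstage_antitone B g (Order.add_one_le_iff.mpr hlt)
    have h2 : bstage B g (β + 1) ⊆ bstage B g β := bstage_antitone B g (le_of_lt (lt_add_one β))
    exact hj (Set.Subset.antisymm h2 (hstage ▸ h1))
  · have h1 : bstage B g β ⊆ bstage B g (β' + 1) :=
      bstage_antitone B g (Order.add_one_le_iff.mpr hlt)
    have h2 : bstage B g (β' + 1) ⊆ bstage B g β' := bstage_antitone B g (le_of_lt (lt_add_one β'))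
    exact hj' (Set.Subset.antisymm h2 (hstage.symm ▸ h1))

theorem exit_value {g : Y → Bool} {α : Ordinal.{0}} {x : Y}
    (hx : x ∈ bstage B g α) (hx' : x ∉ bstage B g (α + 1)) :
    g x = true ↔ ∃ k ∈ Kset B g α, x ∈ B k := by
  constructor
  · intro hgx
    rw [bstage_succ] at hx'
    have hxU : x ∈ ⋃ (k : ℕ) (_ : ConstOn B g (bstage B g α) k), B k := by
      by_contra hc
      exact hx' ⟨hx, hc⟩
    obtain ⟨k, hk, hxk⟩ := by
      simpa only [Set.mem_iUnion, exists_prop] using hxU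
    refine ⟨k, ⟨hk, ⟨x, hxk, hx⟩, fun y hy => ?_⟩, hxk⟩
    rw [hk y hy x ⟨hxk, hx⟩, hgx]
  · rintro ⟨k, ⟨hconst, hne, hval⟩, hxk⟩
    exact hval x ⟨hxk, hx⟩

/-- Reconstruction of `g` from its code. -/
def recon (𝒮 : Set (Set ℕ × Set ℕ)) (x : Y) : Prop :=
  ∃ p ∈ 𝒮, (∀ k, x ∈ B k → k ∈ p.1) ∧
    (∀ q ∈ 𝒮, (∀ k, x ∈ B k → k ∈ q.1) → p.1 ⊆ q.1) ∧ ∃ k ∈ p.2, x ∈ B k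

theorem mem_stage_iff_Cset (hBE : IsBasisEnum B) (g : Y → Bool) (β : Ordinal.{0}) (x : Y) :
    x ∈ bstage B g β ↔ ∀ k, x ∈ B k → k ∈ Cset B g β :=
  mem_closed_iff B hBE (bstage_isClosed B g hBE.1 β) x

theorem recon_spec (hBE : IsBasisEnum B) {g : Y → Bool} (hP : PProp B g) (x : Y) :
    recon B (codeOf B g) x ↔ g x = true := by
  obtain ⟨α, hxα, hxα'⟩ := exists_exit B hP hBE.1 x
  have hjα : IsJump B g α := fun h => hxα' (h.symm ▸ hxα)
  -- jumps β whose stage contains x satisfy β ≤ α hence Cset α ⊆ Cset β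
  have hmin : ∀ β : Ordinal.{0}, IsJump B g β → x ∈ bstage B g β →
      Cset B g α ⊆ Cset B g β := by
    intro β hjβ hxβ
    have hβα : β ≤ α := by
      by_contra hgt
      push_neg at hgt
      have : bstage B g β ⊆ bstage B g (α + 1) :=
        bstage_antitone B g (Order.add_one_le_iff.mpr hgt)
      exact hxα' (this hxβ)
    intro k hk
    obtain ⟨y, hy1, hy2⟩ := hk
    exact ⟨y, hy1, bstage_antitone B g hβα hy2⟩
  constructor
  · rintro ⟨p, ⟨β, hjβ, rfl⟩, hxp, hpmin, k, hkK, hxk⟩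
    -- the minimal window set forces β = α
    have hxβ : x ∈ bstage B g β := (mem_stage_iff_Cset B hBE g β x).mpr hxp
    have h1 : Cset B g α ⊆ Cset B g β := hmin β hjβ hxβ
    have h2 : Cset B g β ⊆ Cset B g α := by
      refine hpmin (Cset B g α, Kset B g α) ⟨α, hjα, rfl⟩ ?_
      exact fun k hk => (mem_stage_iff_Cset B hBE g α x).mp hxα k hk
    have hβα : β = α := jump_eq_of_Cset B hBE hjβ hjα (Set.Subset.antisymm h2 h1)
    subst hβα
    exact (exit_value B hxβ hxα').mpr ⟨k, hkK, hxk⟩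
  · intro hgx
    refine ⟨(Cset B g α, Kset B g α), ⟨α, hjα, rfl⟩,
      fun k hk => (mem_stage_iff_Cset B hBE g α x).mp hxα k hk, ?_, ?_⟩
    · rintro q ⟨β, hjβ, rfl⟩ hxq
      exact hmin β hjβ ((mem_stage_iff_Cset B hBE g β x).mpr hxq)
    · exact (exit_value B hxα hxα').mp hgx

theorem codeOf_injective (hBE : IsBasisEnum B) {g g' : Y → Bool} (hP : PProp B g)
    (hP' : PProp B g') (h : codeOf B g = codeOf B g') : g = g' := by
  funext x
  have := (recon_spec B hBE hP x).symm.trans (h ▸ recon_spec B hBE hP' x)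
  rcases Bool.eq_false_or_eq_true (g x) with h1 | h1 <;>
    rcases Bool.eq_false_or_eq_true (g' x) with h2 | h2 <;> simp_all

theorem codeOf_countable (hBE : IsBasisEnum B) {g : Y → Bool} (hP : PProp B g) :
    (codeOf B g).Countable := by
  have hJ : {α : Ordinal.{0} | IsJump B g α}.Countable := by
    rw [Set.countable_iff_exists_injective]
    refine ⟨fun β => jIdx B g β.1, ?_⟩
    intro β β' heq
    rcases lt_trichotomy β.1 β'.1 with hlt | heq' | hlt
    · exact absurd heq (jIdx_injOn B hP hBE.1 (jump_stage_nonempty B β.2)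
        (jump_stage_nonempty B β'.2) hlt)
    · exact Subtype.ext heq'
    · exact absurd heq.symm (jIdx_injOn B hP hBE.1 (jump_stage_nonempty B β'.2)
        (jump_stage_nonempty B β.2) hlt)
  exact hJ.image _

end PCount

section CountAux

/-- Encode a countable subset of `γ` as a function `ℕ → Option γ`. -/
theorem mk_countable_subsets_le (γ : Type) :
    Cardinal.mk {s : Set γ // s.Countable} ≤ Cardinal.mk (ℕ → Option γ) := by
  have henc : ∀ s : {s : Set γ // s.Countable}, ∃ f : ℕ → Option γ,
      s.1 = {x | ∃ n, f n = some x} := by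
    rintro ⟨s, hs⟩
    rcases Set.eq_empty_or_nonempty s with he | hne
    · exact ⟨fun _ => none, by simp [he]⟩
    · obtain ⟨f, hf⟩ := hs.exists_eq_range hne
      refine ⟨fun n => some (f n), ?_⟩
      simp only [hf]
      ext x
      simp [Set.mem_range, eq_comm]
  choose F hF using henc
  refine Cardinal.mk_le_of_injective (f := F) ?_
  intro s s' h
  apply Subtype.ext
  rw [hF s, hF s', h]

theorem mk_fun_nat_option_le : Cardinal.mk (ℕ → Option (Set ℕ × Set ℕ)) ≤ Cardinal.continuum := by
  rw [← Cardinal.power_def, Cardinal.mk_nat]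
  have h1 : Cardinal.mk (Option (Set ℕ × Set ℕ)) = Cardinal.continuum := by
    rw [Cardinal.mk_option, Cardinal.mk_prod, Cardinal.mk_set_nat, Cardinal.lift_id,
      Cardinal.continuum_mul_self]
    exact Cardinal.add_one_eq Cardinal.aleph0_le_continuum
  rw [h1, Cardinal.continuum_power_aleph0]

end CountAux

section PCount2
variable {Y : Type} [TopologicalSpace Y] (B : ℕ → Set Y)

theorem mk_PProp_le_continuum (hBE : IsBasisEnum B) :
    Cardinal.mk {g : Y → Bool // PProp B g} ≤ Cardinal.continuum := by
  have hinj : Function.Injective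
      (fun g : {g : Y → Bool // PProp B g} =>
        (⟨codeOf B g.1, codeOf_countable B hBE g.2⟩ : {s : Set (Set ℕ × Set ℕ) // s.Countable})) := by
    intro g g' h
    exact Subtype.ext (codeOf_injective B hBE g.2 g'.2 (congrArg Subtype.val h))
  calc Cardinal.mk {g : Y → Bool // PProp B g}
      ≤ Cardinal.mk {s : Set (Set ℕ × Set ℕ) // s.Countable} := Cardinal.mk_le_of_injective hinj
    _ ≤ Cardinal.mk (ℕ → Option (Set ℕ × Set ℕ)) := mk_countable_subsets_le _
    _ ≤ Cardinal.continuum := mk_fun_nat_option_le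

end PCount2

section Subshift
open BinarySubshift

theorem binShift_iterate_apply (i : ℕ) (x : BinSeq) (n : ℕ) :
    binShift^[i] x n = x (n + i) := by
  induction i generalizing x n with
  | zero => rfl
  | succ i IH =>
    rw [Function.iterate_succ_apply, IH, binShift]
    ring_nf

theorem shift_iterate_mem (X : BinarySubshift) (i : ℕ) {x : BinSeq} (hx : x ∈ X.carrier) :
    binShift^[i] x ∈ X.carrier := by
  induction i with
  | zero => exact hx
  | succ i IH => rw [Function.iterate_succ_apply']; exact X.shift_mem _ IH

instance (X : BinarySubshift) : CompactSpace X.carrier :=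
  isCompact_iff_compactSpace.mp X.isClosed.isCompact

theorem S_iterate_coe (X : BinarySubshift) (n : ℕ) (x : X.carrier) :
    ((X.S)^[n] x).1 = binShift^[n] x.1 := by
  induction n with
  | zero => rfl
  | succ n IH => rw [Function.iterate_succ_apply', Function.iterate_succ_apply', ← IH]; rfl

/-- Evaluation of the `n`-th coordinate. -/
def EvalF (X : BinarySubshift) (n : ℕ) : X.carrier → Bool := fun x => x.1 n

/-- The pointwise closure of the (shifted) coordinate evaluations. -/
def Kl (X : BinarySubshift) : Set (X.carrier → Bool) :=
  closure (Set.range fun n : ℕ => EvalF X (n + 1))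

theorem continuous_eval0 (X : BinarySubshift) :
    Continuous fun y : X.carrier => y.1 0 :=
  (continuous_apply 0).comp continuous_subtype_val

/-- The map from `X^X` to `Bool^X` remembering the 0-th coordinate. -/
def Phi (X : BinarySubshift) (q : X.carrier → X.carrier) : X.carrier → Bool :=
  fun x => (q x).1 0

theorem continuous_Phi (X : BinarySubshift) : Continuous (Phi X) := by
  refine continuous_pi fun x => ?_
  exact (continuous_eval0 X).comp (continuous_apply x)

theorem Phi_S_iterate (X : BinarySubshift) (n : ℕ) :
    Phi X ((X.S)^[n + 1]) = EvalF X (n + 1) := by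
  funext x
  show ((X.S)^[n+1] x).1 0 = x.1 (n + 1)
  rw [S_iterate_coe, binShift_iterate_apply, Nat.zero_add]

theorem Phi_mem_Kl (X : BinarySubshift) {q : X.carrier → X.carrier} (hq : q ∈ X.Ellis) :
    Phi X q ∈ Kl X := by
  have h1 : Phi X q ∈ closure (Phi X '' Set.range fun n : ℕ => (X.S)^[n + 1]) :=
    (Set.mapsTo_image _ _).closure (continuous_Phi X) hq
  refine closure_mono ?_ h1
  rintro _ ⟨_, ⟨n, rfl⟩, rfl⟩
  exact ⟨n, (Phi_S_iterate X n).symm⟩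

theorem Ellis_commutes (X : BinarySubshift) {p : X.carrier → X.carrier} (hp : p ∈ X.Ellis) :
    ∀ (x : X.carrier) (k : ℕ), (p x).1 k = (p ((X.S)^[k] x)).1 0 := by
  have hclosed : IsClosed {q : X.carrier → X.carrier |
      ∀ (x : X.carrier) (k : ℕ), (q x).1 k = (q ((X.S)^[k] x)).1 0} := by
    have : {q : X.carrier → X.carrier |
        ∀ (x : X.carrier) (k : ℕ), (q x).1 k = (q ((X.S)^[k] x)).1 0} =
        ⋂ (x : X.carrier) (k : ℕ),
          {q : X.carrier → X.carrier | (q x).1 k = (q ((X.S)^[k] x)).1 0} := by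
      ext q; simp [Set.mem_iInter]
    rw [this]
    refine isClosed_iInter fun x => isClosed_iInter fun k => ?_
    have hc1 : Continuous fun q : X.carrier → X.carrier => (q x).1 k :=
      ((continuous_apply k).comp continuous_subtype_val).comp (continuous_apply x)
    have hc2 : Continuous fun q : X.carrier → X.carrier => (q ((X.S)^[k] x)).1 0 :=
      (continuous_eval0 X).comp (continuous_apply _)
    exact isClosed_eq hc1 hc2
  have hsub : (Set.range fun n : ℕ => (X.S)^[n + 1]) ⊆ {q : X.carrier → X.carrier |
      ∀ (x : X.carrier) (k : ℕ), (q x).1 k = (q ((X.S)^[k] x)).1 0} := by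
    rintro _ ⟨n, rfl⟩ x k
    show ((X.S)^[n+1] x).1 k = ((X.S)^[n+1] ((X.S)^[k] x)).1 0
    rw [← Function.iterate_add_apply]
    rw [S_iterate_coe, S_iterate_coe, binShift_iterate_apply, binShift_iterate_apply]
    have : k + (n + 1) = 0 + (n + 1 + k) := by omega
    rw [this]
  exact closure_minimal hsub hclosed hp

theorem Phi_injOn_Ellis (X : BinarySubshift) {p p' : X.carrier → X.carrier}
    (hp : p ∈ X.Ellis) (hp' : p' ∈ X.Ellis) (h : Phi X p = Phi X p') : p = p' := by
  funext x
  apply Subtype.ext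
  funext k
  have h1 := Ellis_commutes X hp x k
  have h2 := Ellis_commutes X hp' x k
  rw [h1, h2]
  exact congrFun h ((X.S)^[k] x)

end Subshift

section Scheme
variable (X : BinarySubshift)

/-- The trace cell: points of `F` matching the pattern `φ` on `T`. -/
def cellSet (F : Set X.carrier) (T : Finset ℕ) (φ : ℕ → Bool) : Set X.carrier :=
  {x | x ∈ F ∧ ∀ t ∈ T, x.1 t = φ t}

/-- All patterns on `T` are realized in `F`. -/
def NiceT (F : Set X.carrier) (T : Finset ℕ) : Prop :=
  ∀ φ : ℕ → Bool, (cellSet X F T φ).Nonempty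

theorem isOpen_patternSet (T : Finset ℕ) (φ : ℕ → Bool) :
    IsOpen {x : X.carrier | ∀ t ∈ T, x.1 t = φ t} := by
  have : {x : X.carrier | ∀ t ∈ T, x.1 t = φ t} =
      ⋂ t ∈ (T : Set ℕ), (fun x : X.carrier => x.1 t) ⁻¹' {φ t} := by
    ext x; simp [Set.mem_iInter]
  rw [this]
  exact T.finite_toSet.isOpen_biInter fun t _ =>
    (isOpen_discrete _).preimage ((continuous_apply t).comp continuous_subtype_val)

theorem cellSet_eq (F : Set X.carrier) (T : Finset ℕ) (φ : ℕ → Bool) :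
    cellSet X F T φ = {x : X.carrier | ∀ t ∈ T, x.1 t = φ t} ∩ F := by
  ext x; exact ⟨fun h => ⟨h.2, h.1⟩, fun h => ⟨h.2, h.1⟩⟩

theorem nice_extend (g : X.carrier → Bool) (F : Set X.carrier)
    (hdense : ∀ U : Set X.carrier, IsOpen U → (U ∩ F).Nonempty → ∀ b : Bool,
      ∃ y, y ∈ U ∩ F ∧ g y = b)
    (hclust : ∀ m : ℕ, g ∈ closure (Set.range fun n : ℕ => EvalF X (n + m + 1)))
    (T : Finset ℕ) (hT : NiceT X F T) :
    ∃ N : ℕ, (∀ t ∈ T, t < N) ∧ NiceT X F (insert N T) := by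
  classical
  have hw : ∀ s : Finset ℕ, ∀ b : Bool,
      ∃ y, y ∈ cellSet X F T (fun t => decide (t ∈ s)) ∧ g y = b := by
    intro s b
    have hne := hT (fun t => decide (t ∈ s))
    rw [cellSet_eq] at hne
    obtain ⟨y, hy, hgy⟩ := hdense _ (isOpen_patternSet X T _) hne b
    refine ⟨y, ?_, hgy⟩
    rw [cellSet_eq]
    exact hy
  choose y hy1 hy2 using hw
  set O : Set (X.carrier → Bool) :=
    {h | ∀ s ∈ T.powerset, ∀ b : Bool, h (y s b) = b} with hO
  have hOopen : IsOpen O := by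
    have : O = ⋂ s ∈ (T.powerset : Set (Finset ℕ)), ⋂ b : Bool,
        (fun h : X.carrier → Bool => h (y s b)) ⁻¹' {b} := by
      ext h; simp [hO, Set.mem_iInter]
    rw [this]
    exact T.powerset.finite_toSet.isOpen_biInter fun s _ =>
      isOpen_iInter_of_finite fun b =>
        (isOpen_discrete _).preimage (continuous_apply (y s b))
  have hgO : g ∈ O := fun s _ b => hy2 s b
  set m := T.sup id + 1 with hm
  obtain ⟨h, hhO, n, rfl⟩ := (_root_.mem_closure_iff.mp (hclust m)) O hOopen hgO
  refine ⟨n + m + 1, fun t ht => ?_, fun φ => ?_⟩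
  · have : t ≤ T.sup id := Finset.le_sup (f := id) ht
    omega
  · set s : Finset ℕ := T.filter (fun t => φ t = true) with hs
    have hsmem : s ∈ T.powerset := Finset.mem_powerset.mpr (Finset.filter_subset _ _)
    have hyN : (y s (φ (n + m + 1))).1 (n + m + 1) = φ (n + m + 1) :=
      hhO s hsmem (φ (n + m + 1))
    refine ⟨y s (φ (n + m + 1)), (hy1 s (φ (n + m + 1))).1, fun t ht => ?_⟩
    rcases Finset.mem_insert.mp ht with rfl | htT
    · exact hyN
    · have := (hy1 s (φ (n + m + 1))).2 t htT
      rw [this]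
      by_cases hφ : φ t = true
      · have : t ∈ s := Finset.mem_filter.mpr ⟨htT, hφ⟩
        simp [this, hφ]
      · have h1 : t ∉ s := fun hc => hφ (Finset.mem_filter.mp hc).2
        have h2 : φ t = false := by
          cases hφ2 : φ t
          · rfl
          · exact absurd hφ2 hφ
        simp [h1, h2]

theorem indep_of_dense_osc (g : X.carrier → Bool) (F : Set X.carrier) (hF : F.Nonempty)
    (hdense : ∀ U : Set X.carrier, IsOpen U → (U ∩ F).Nonempty → ∀ b : Bool,
      ∃ y, y ∈ U ∩ F ∧ g y = b)
    (hclust : ∀ m : ℕ, g ∈ closure (Set.range fun n : ℕ => EvalF X (n + m + 1))) :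
    ∃ Jset : Set ℕ, Jset.Infinite ∧
      IsIndependenceSet X.carrier
        {x ∈ X.carrier | x 0 = false} {x ∈ X.carrier | x 0 = true} Jset := by
  classical
  have step : ∀ T : Finset ℕ, NiceT X F T →
      ∃ N, (∀ t ∈ T, t < N) ∧ NiceT X F (insert N T) :=
    fun T hT => nice_extend X g F hdense hclust T hT
  set nxt : Finset ℕ → ℕ := fun T => if h : NiceT X F T then (step T h).choose else 0 with hnxt
  set Tn : ℕ → Finset ℕ := fun k => Nat.rec ∅ (fun _ Tk => insert (nxt Tk) Tk) k with hTn
  have hTsucc : ∀ k, Tn (k + 1) = insert (nxt (Tn k)) (Tn k) := fun k => rfl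
  have hnice : ∀ k, NiceT X F (Tn k) := by
    intro k
    induction k with
    | zero =>
      intro φ
      obtain ⟨x, hx⟩ := hF
      exact ⟨x, hx, by simp [hTn]⟩
    | succ k IH =>
      rw [hTsucc k]
      show NiceT X F (insert (if h : NiceT X F (Tn k) then (step (Tn k) h).choose else 0) (Tn k))
      rw [dif_pos IH]
      exact (step (Tn k) IH).choose_spec.2
  have hlt : ∀ k, ∀ t ∈ Tn k, t < nxt (Tn k) := by
    intro k t ht
    show t < (if h : NiceT X F (Tn k) then (step (Tn k) h).choose else 0)
    rw [dif_pos (hnice k)]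
    exact (step (Tn k) (hnice k)).choose_spec.1 t ht
  have hmono : ∀ k l, k ≤ l → Tn k ⊆ Tn l := by
    intro k l hkl
    induction hkl with
    | refl => exact Finset.Subset.refl _
    | step h IH => exact IH.trans (by rw [hTsucc]; exact Finset.subset_insert _ _)
  set J : Set ℕ := ⋃ k, (Tn k : Set ℕ) with hJ
  set u : ℕ → ℕ := fun k => nxt (Tn k) with hu
  have humem : ∀ k, u k ∈ J := fun k =>
    Set.mem_iUnion.mpr ⟨k + 1, by rw [hTsucc]; exact Finset.mem_insert_self _ _⟩
  have hustrict : StrictMono u := by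
    apply strictMono_nat_of_lt_succ
    intro k
    apply hlt (k + 1)
    rw [hTsucc]
    exact Finset.mem_insert_self _ _
  refine ⟨J, Set.infinite_of_injective_forall_mem hustrict.injective humem, ?_⟩
  intro I hIJ φ
  have hfind : ∀ i ∈ I, ∃ k, i ∈ Tn k := by
    intro i hi
    obtain ⟨s, ⟨k, rfl⟩, hik⟩ := hIJ hi
    exact ⟨k, hik⟩
  set K : ℕ := I.sup (fun i => if h : ∃ k, i ∈ Tn k then Nat.find h else 0) with hK
  have hIK : ∀ i ∈ I, i ∈ Tn K := by
    intro i hi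
    have h := hfind i hi
    have h1 : i ∈ Tn (Nat.find h) := Nat.find_spec h
    have h2 : Nat.find h ≤ K := by
      rw [hK]
      refine le_trans (le_of_eq ?_) (Finset.le_sup hi)
      rw [dif_pos h]
    exact hmono _ _ h2 h1
  obtain ⟨x, hxF, hxφ⟩ := hnice K φ
  refine ⟨x.1, x.2, fun i hi => ?_⟩
  have hco : binShift^[i] x.1 0 = φ i := by
    rw [binShift_iterate_apply, Nat.zero_add]
    exact hxφ i (hIK i hi)
  by_cases hb : φ i = true
  · rw [if_pos hb]
    exact ⟨shift_iterate_mem X i x.2, by rw [hco, hb]⟩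
  · rw [if_neg hb]
    refine ⟨shift_iterate_mem X i x.2, ?_⟩
    rw [hco]
    cases hb2 : φ i
    · rfl
    · exact absurd hb2 hb

end Scheme

section Hard
variable (X : BinarySubshift)

theorem mem_tail_closure {g : X.carrier → Bool} (hg : g ∈ Kl X)
    (hr : g ∉ Set.range fun n : ℕ => EvalF X (n + 1)) :
    ∀ m : ℕ, g ∈ closure (Set.range fun n : ℕ => EvalF X (n + m + 1)) := by
  intro m
  induction m with
  | zero => simpa [Kl] using hg
  | succ m IH =>
    have hsplit : (Set.range fun n : ℕ => EvalF X (n + m + 1)) =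
        insert (EvalF X (m + 1)) (Set.range fun n : ℕ => EvalF X (n + (m + 1) + 1)) := by
      ext h
      constructor
      · rintro ⟨n, rfl⟩
        cases n with
        | zero =>
          left
          show EvalF X (0 + m + 1) = EvalF X (m + 1)
          rw [Nat.zero_add]
        | succ n =>
          right
          refine ⟨n, ?_⟩
          show EvalF X (n + (m + 1) + 1) = EvalF X (n + 1 + m + 1)
          rw [show n + (m + 1) + 1 = n + 1 + m + 1 from by omega]
      · rintro (rfl | ⟨n, rfl⟩)
        · refine ⟨0, ?_⟩
          show EvalF X (0 + m + 1) = EvalF X (m + 1)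
          rw [Nat.zero_add]
        · refine ⟨n + 1, ?_⟩
          show EvalF X (n + 1 + m + 1) = EvalF X (n + (m + 1) + 1)
          rw [show n + 1 + m + 1 = n + (m + 1) + 1 from by omega]
    rw [hsplit, Set.insert_eq, closure_union, (isClosed_singleton).closure_eq] at IH
    rcases IH with h1 | h1
    · exact absurd (Set.mem_singleton_iff.mp h1 ▸ Set.mem_range_self m) hr
    · exact h1

theorem dense_osc_of_not_PProp {B : ℕ → Set X.carrier} (hBE : IsBasisEnum B)
    {g : X.carrier → Bool} (hnP : ¬ PProp B g) :
    ∃ F : Set X.carrier, F.Nonempty ∧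
      ∀ U : Set X.carrier, IsOpen U → (U ∩ F).Nonempty → ∀ b : Bool,
        ∃ y, y ∈ U ∩ F ∧ g y = b := by
  rw [PProp] at hnP
  push_neg at hnP
  obtain ⟨F, hFc, hFne, hF⟩ := hnP
  refine ⟨F, hFne, fun U hU hUF b => ?_⟩
  obtain ⟨z, hzU, hzF⟩ := hUF
  obtain ⟨k, hzk, hkU⟩ := hBE.2 U hU z hzU
  have hne : (B k ∩ F).Nonempty := ⟨z, hzk, hzF⟩
  have hnc := hF k hne
  rw [ConstOn] at hnc
  push_neg at hnc
  obtain ⟨x, hx, y, hy, hxy⟩ := hnc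
  by_cases hgx : g x = b
  · exact ⟨x, ⟨hkU hx.1, hx.2⟩, hgx⟩
  · refine ⟨y, ⟨hkU hy.1, hy.2⟩, ?_⟩
    cases b <;> cases hb1 : g x <;> cases hb2 : g y <;> simp_all

theorem nontame_to_indep (hNT : X.NonTame) :
    ∃ Jset : Set ℕ, Jset.Infinite ∧
      IsIndependenceSet X.carrier
        {x ∈ X.carrier | x 0 = false} {x ∈ X.carrier | x 0 = true} Jset := by
  by_contra hcon
  obtain ⟨B, hBE⟩ := exists_basisEnum (Y := X.carrier)
  have hKl : Kl X ⊆ (Set.range fun n : ℕ => EvalF X (n + 1)) ∪ {g | PProp B g} := by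
    intro g hg
    by_cases hr : g ∈ Set.range fun n : ℕ => EvalF X (n + 1)
    · exact Or.inl hr
    · refine Or.inr ?_
      by_contra hnP
      obtain ⟨F, hFne, hdense⟩ := dense_osc_of_not_PProp X hBE hnP
      exact hcon (indep_of_dense_osc X g F hFne hdense (mem_tail_closure X hg hr))
  have h1 : Cardinal.mk ↥X.Ellis ≤ Cardinal.mk ↥(Kl X) := by
    refine Cardinal.mk_le_of_injective
      (f := fun p : ↥X.Ellis => (⟨Phi X p.1, Phi_mem_Kl X p.2⟩ : ↥(Kl X))) ?_
    intro p p' h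
    exact Subtype.ext (Phi_injOn_Ellis X p.2 p'.2 (congrArg Subtype.val h))
  have h2 : Cardinal.mk ↥(Kl X) ≤ Cardinal.continuum := by
    refine le_trans (Cardinal.mk_le_mk_of_subset hKl) ?_
    refine le_trans (Cardinal.mk_union_le _ _) ?_
    have ha : Cardinal.mk ↥(Set.range fun n : ℕ => EvalF X (n + 1)) ≤ Cardinal.continuum :=
      le_trans Cardinal.mk_range_le (by rw [Cardinal.mk_nat]; exact Cardinal.aleph0_le_continuum)
    have hb : Cardinal.mk ↥{g : X.carrier → Bool | PProp B g} ≤ Cardinal.continuum :=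
      mk_PProp_le_continuum B hBE
    calc Cardinal.mk ↥(Set.range fun n : ℕ => EvalF X (n + 1)) +
          Cardinal.mk ↥{g : X.carrier → Bool | PProp B g}
        ≤ Cardinal.continuum + Cardinal.continuum := add_le_add ha hb
      _ = Cardinal.continuum := Cardinal.continuum_add_self
  exact absurd hNT (not_lt.mpr (h1.trans h2))

end Hard

section Easy
variable (X : BinarySubshift)

theorem realize_pattern {J : Set ℕ}
    (hind : IsIndependenceSet X.carrier
      {x ∈ X.carrier | x 0 = false} {x ∈ X.carrier | x 0 = true} J)
    (A : Set ℕ) : ∃ x ∈ X.carrier, ∀ n ∈ J, (x n = true ↔ n ∈ A) := by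
  classical
  set χ : ℕ → Bool := fun n => decide (n ∈ A) with hχ
  set Z : {I : Finset ℕ // ↑I ⊆ J} → Set BinSeq :=
    fun I => {x | x ∈ X.carrier ∧ ∀ i ∈ I.1, x i = χ i} with hZ
  have hZne : ∀ I, (Z I).Nonempty := by
    rintro ⟨I, hI⟩
    obtain ⟨x, hx, hxi⟩ := hind I hI χ
    refine ⟨x, hx, fun i hi => ?_⟩
    have hmem := hxi i hi
    by_cases hb : χ i = true
    · rw [if_pos hb] at hmem
      have h0 := hmem.2
      rw [binShift_iterate_apply, Nat.zero_add] at h0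
      rw [h0, hb]
    · rw [if_neg hb] at hmem
      have h0 := hmem.2
      rw [binShift_iterate_apply, Nat.zero_add] at h0
      rw [h0]
      cases hbb : χ i
      · rfl
      · exact absurd hbb hb
  have hZclosed : ∀ I, IsClosed (Z I) := by
    rintro ⟨I, hI⟩
    have : Z ⟨I, hI⟩ = X.carrier ∩ ⋂ i ∈ (I : Set ℕ), (fun x : BinSeq => x i) ⁻¹' {χ i} := by
      ext x
      simp [hZ, Set.mem_iInter]
    rw [this]
    exact X.isClosed.inter (isClosed_biInter fun i _ =>
      (isClosed_discrete _).preimage (continuous_apply i))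
  have hdir : Directed (· ⊇ ·) Z := by
    rintro I I'
    refine ⟨⟨I.1 ∪ I'.1, ?_⟩, ?_, ?_⟩
    · intro i hi
      rcases Finset.mem_union.mp hi with h | h
      · exact I.2 h
      · exact I'.2 h
    · rintro x ⟨hx1, hx2⟩
      exact ⟨hx1, fun i hi => hx2 i (Finset.mem_union_left _ hi)⟩
    · rintro x ⟨hx1, hx2⟩
      exact ⟨hx1, fun i hi => hx2 i (Finset.mem_union_right _ hi)⟩
  have hne : (⋂ I, Z I).Nonempty := by
    have : Nonempty {I : Finset ℕ // ↑I ⊆ J} := ⟨⟨∅, by simp⟩⟩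
    exact IsCompact.nonempty_iInter_of_directed_nonempty_isCompact_isClosed Z hdir hZne
      (fun I => (hZclosed I).isCompact) hZclosed
  obtain ⟨x, hx⟩ := hne
  have hxmem : ∀ I, x ∈ Z I := Set.mem_iInter.mp hx
  have hxc : x ∈ X.carrier := (hxmem ⟨∅, by simp⟩).1
  refine ⟨x, hxc, fun n hn => ?_⟩
  have := (hxmem ⟨{n}, by simpa using hn⟩).2 n (Finset.mem_singleton_self n)
  rw [this]
  show decide (n ∈ A) = true ↔ n ∈ A
  exact decide_eq_true_iff

/-- Index type for the independent family. -/
abbrev Dtype := Finset ℕ × Finset (Finset ℕ)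

/-- The canonical independent family on `Dtype`. -/
def IndSet (S : Set ℕ) : Set Dtype :=
  {d | @Finset.filter ℕ (· ∈ S) (Classical.decPred _) d.1 ∈ d.2}

theorem indep_family (P Q : Finset (Set ℕ)) (hPQ : ∀ S ∈ P, ∀ T ∈ Q, S ≠ T) :
    ∃ d : Dtype, (∀ S ∈ P, d ∈ IndSet S) ∧ ∀ T ∈ Q, d ∉ IndSet T := by
  classical
  have hsepex : ∀ S T : Set ℕ, S ≠ T → ∃ n, ¬ (n ∈ S ↔ n ∈ T) := by
    intro S T h
    by_contra hc
    push_neg at hc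
    exact h (Set.ext fun n => hc n)
  choose! sep hsep using hsepex
  set F : Finset ℕ := P.biUnion (fun S => Q.image (fun T => sep S T)) with hF
  set G : Finset (Finset ℕ) :=
    P.image (fun S => @Finset.filter ℕ (· ∈ S) (Classical.decPred _) F) with hG
  refine ⟨(F, G), fun S hS => ?_, ?_⟩
  · exact Finset.mem_image_of_mem (fun S : Set ℕ => @Finset.filter ℕ (· ∈ S) (Classical.decPred _) F) hS
  · intro T hT hmem
    obtain ⟨S, hS, heq⟩ := Finset.mem_image.mp hmem
    have hSneT := hPQ S hS T hT
    have hnF : sep S T ∈ F :=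
      Finset.mem_biUnion.mpr ⟨S, hS, Finset.mem_image_of_mem _ hT⟩
    apply hsep S T hSneT
    have h1 := Finset.ext_iff.mp heq (sep S T)
    rw [Finset.mem_filter, Finset.mem_filter] at h1
    constructor
    · intro h
      exact (h1.mp ⟨hnF, h⟩).2
    · intro h
      exact (h1.mpr ⟨hnF, h⟩).2

end Easy

section Easy2
variable (X : BinarySubshift)

noncomputable def etaMap {J : Set ℕ} (hJ : J.Infinite) : Dtype → ℕ :=
  fun d => (Set.Infinite.natEmbedding J hJ (Encodable.encode d)).1

theorem etaMap_injective {J : Set ℕ} (hJ : J.Infinite) : Function.Injective (etaMap hJ) := by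
  intro d d' h
  exact Encodable.encode_injective ((Set.Infinite.natEmbedding J hJ).injective (Subtype.ext h))

theorem etaMap_mem {J : Set ℕ} (hJ : J.Infinite) (d : Dtype) : etaMap hJ d ∈ J :=
  (Set.Infinite.natEmbedding J hJ _).2

/-- The filter subbasis realizing the boolean assignment `h`. -/
def CsetH {J : Set ℕ} (hJ : J.Infinite) (h : Set ℕ → Bool) (S : Set ℕ) : Set ℕ :=
  etaMap hJ '' (if h S = true then IndSet S else (IndSet S)ᶜ)

theorem CsetH_neBot {J : Set ℕ} (hJ : J.Infinite) (h : Set ℕ → Bool) :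
    Filter.NeBot (Filter.generate (Set.range (CsetH hJ h))) := by
  rw [Filter.generate_neBot_iff]
  intro t hsub hfin
  classical
  have hex : ∀ u ∈ hfin.toFinset, ∃ S : Set ℕ, u = CsetH hJ h S := by
    intro u hu
    obtain ⟨S, hS⟩ := hsub (hfin.mem_toFinset.mp hu)
    exact ⟨S, hS.symm⟩
  choose σ hσ using hex
  set P : Finset (Set ℕ) :=
    (hfin.toFinset.attach.filter (fun u => h (σ u.1 u.2) = true)).image
      (fun u => σ u.1 u.2) with hP
  set Q : Finset (Set ℕ) :=
    (hfin.toFinset.attach.filter (fun u => ¬ (h (σ u.1 u.2) = true))).image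
      (fun u => σ u.1 u.2) with hQ
  have hPQ : ∀ S ∈ P, ∀ T ∈ Q, S ≠ T := by
    intro S hS T hT
    obtain ⟨u, hu, rfl⟩ := Finset.mem_image.mp hS
    obtain ⟨v, hv, rfl⟩ := Finset.mem_image.mp hT
    have h1 := (Finset.mem_filter.mp hu).2
    have h2 := (Finset.mem_filter.mp hv).2
    intro he
    rw [he] at h1
    exact h2 h1
  obtain ⟨d, hd1, hd2⟩ := indep_family P Q hPQ
  refine ⟨etaMap hJ d, fun u hu => ?_⟩
  have hu' : u ∈ hfin.toFinset := hfin.mem_toFinset.mpr hu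
  have heq := hσ u hu'
  by_cases hb : h (σ u hu') = true
  · have hPm : σ u hu' ∈ P := Finset.mem_image.mpr
      ⟨⟨u, hu'⟩, Finset.mem_filter.mpr ⟨Finset.mem_attach _ _, hb⟩, rfl⟩
    rw [heq, CsetH, if_pos hb]
    exact Set.mem_image_of_mem _ (hd1 _ hPm)
  · have hQm : σ u hu' ∈ Q := Finset.mem_image.mpr
      ⟨⟨u, hu'⟩, Finset.mem_filter.mpr ⟨Finset.mem_attach _ _, hb⟩, rfl⟩
    rw [heq, CsetH, if_neg hb]
    exact Set.mem_image_of_mem _ (hd2 _ hQm)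

noncomputable def UH {J : Set ℕ} (hJ : J.Infinite) (h : Set ℕ → Bool) : Ultrafilter ℕ :=
  (@Ultrafilter.exists_le ℕ _ (CsetH_neBot hJ h)).choose

theorem UH_mem {J : Set ℕ} (hJ : J.Infinite) (h : Set ℕ → Bool) (S : Set ℕ) :
    CsetH hJ h S ∈ UH hJ h := by
  have hle := (@Ultrafilter.exists_le ℕ _ (CsetH_neBot hJ h)).choose_spec
  exact hle (Filter.mem_generate_of_mem (Set.mem_range_self S))

theorem exists_lim (U : Ultrafilter ℕ) (x : X.carrier) :
    ∃ y : X.carrier, Filter.Tendsto (fun n => (X.S)^[n] x) U (𝓝 y) := by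
  obtain ⟨y, -, hy⟩ := isCompact_univ.ultrafilter_le_nhds
    (U.map fun n => (X.S)^[n] x) (by simp)
  refine ⟨y, ?_⟩
  show Filter.map (fun n => (X.S)^[n] x) ↑U ≤ 𝓝 y
  rw [← Ultrafilter.coe_map]
  exact hy

noncomputable def pU (U : Ultrafilter ℕ) : X.carrier → X.carrier :=
  fun x => (exists_lim X U x).choose

theorem pU_spec (U : Ultrafilter ℕ) (x : X.carrier) :
    Filter.Tendsto (fun n => (X.S)^[n] x) U (𝓝 (pU X U x)) :=
  (exists_lim X U x).choose_spec

theorem pU_mem_Ellis (U : Ultrafilter ℕ) (hU1 : {n : ℕ | 1 ≤ n} ∈ U) :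
    pU X U ∈ X.Ellis := by
  rw [BinarySubshift.Ellis, mem_closure_iff_ultrafilter]
  refine ⟨U.map (fun n => (X.S)^[n]), ?_, ?_⟩
  · have hsub : {n : ℕ | 1 ≤ n} ⊆
        (fun n => (X.S)^[n]) ⁻¹' (Set.range fun n : ℕ => (X.S)^[n + 1]) := by
      intro n hn
      refine ⟨n - 1, ?_⟩
      show (X.S)^[(n - 1) + 1] = (X.S)^[n]
      rw [Nat.sub_add_cancel hn]
    exact Ultrafilter.mem_map.mpr (Filter.mem_of_superset hU1 hsub)
  · rw [Ultrafilter.coe_map]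
    rw [show Filter.map (fun n => (X.S)^[n]) ↑U ≤ 𝓝 (pU X U) ↔
        Filter.Tendsto (fun n => (X.S)^[n]) ↑U (𝓝 (pU X U)) from Iff.rfl]
    rw [tendsto_pi_nhds]
    exact fun x => pU_spec X U x

theorem pU_val (U : Ultrafilter ℕ) (x : X.carrier) (b : Bool)
    (hb : {n : ℕ | x.1 n = b} ∈ U) : (pU X U x).1 0 = b := by
  have ht : Filter.Tendsto (fun n => ((X.S)^[n] x).1 0) U (𝓝 ((pU X U x).1 0)) :=
    ((continuous_eval0 X).tendsto _).comp (pU_spec X U x)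
  have hev : (fun n => ((X.S)^[n] x).1 0) ⁻¹' {(pU X U x).1 0} ∈ U :=
    ht ((isOpen_discrete _).mem_nhds rfl)
  have hco : ∀ n, ((X.S)^[n] x).1 0 = x.1 n := by
    intro n
    rw [S_iterate_coe, binShift_iterate_apply, Nat.zero_add]
  obtain ⟨n, hn1, hn2⟩ := Filter.nonempty_of_mem (Filter.inter_mem hb hev)
  have h1 : x.1 n = b := hn1
  have h2 : ((X.S)^[n] x).1 0 = (pU X U x).1 0 := hn2
  rw [hco n, h1] at h2
  exact h2.symm

theorem indep_to_nontame {J : Set ℕ} (hJinf : J.Infinite)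
    (hind : IsIndependenceSet X.carrier
      {x ∈ X.carrier | x 0 = false} {x ∈ X.carrier | x 0 = true} J) : X.NonTame := by
  classical
  -- remove 0 from J
  set J1 : Set ℕ := J \ {0} with hJ1
  have hJ1inf : J1.Infinite := hJinf.diff (Set.finite_singleton 0)
  have hind1 : IsIndependenceSet X.carrier
      {x ∈ X.carrier | x 0 = false} {x ∈ X.carrier | x 0 = true} J1 :=
    fun I hI φ => hind I (fun i hi => (hI hi).1) φ
  have hJ1pos : ∀ n ∈ J1, 1 ≤ n := by
    intro n hn
    rcases Nat.eq_zero_or_pos n with rfl | h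
    · exact absurd rfl hn.2
    · exact h
  -- realizers
  have hreal : ∀ S : Set ℕ, ∃ x ∈ X.carrier,
      ∀ n ∈ J1, (x n = true ↔ n ∈ etaMap hJ1inf '' IndSet S) :=
    fun S => realize_pattern X hind1 (etaMap hJ1inf '' IndSet S)
  choose xS hxS1 hxS2 using hreal
  -- the injection
  have hU1 : ∀ h : Set ℕ → Bool, {n : ℕ | 1 ≤ n} ∈ UH hJ1inf h := by
    intro h
    refine Filter.mem_of_superset (UH_mem hJ1inf h ∅) ?_
    rintro _ ⟨d, -, rfl⟩
    exact hJ1pos _ (etaMap_mem hJ1inf d)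
  set Ψ : (Set ℕ → Bool) → ↥X.Ellis :=
    fun h => ⟨pU X (UH hJ1inf h), pU_mem_Ellis X (UH hJ1inf h) (hU1 h)⟩ with hΨ
  have hval : ∀ (h : Set ℕ → Bool) (S : Set ℕ),
      (pU X (UH hJ1inf h) ⟨xS S, hxS1 S⟩).1 0 = h S := by
    intro h S
    by_cases hb : h S = true
    · rw [hb]
      refine pU_val X _ _ true ?_
      refine Filter.mem_of_superset (UH_mem hJ1inf h S) ?_
      rw [CsetH, if_pos hb]
      rintro _ ⟨d, hd, rfl⟩
      show xS S (etaMap hJ1inf d) = true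
      exact (hxS2 S _ (etaMap_mem hJ1inf d)).mpr (Set.mem_image_of_mem _ hd)
    · have hb' : h S = false := by
        cases hbb : h S
        · rfl
        · exact absurd hbb hb
      rw [hb']
      refine pU_val X _ _ false ?_
      refine Filter.mem_of_superset (UH_mem hJ1inf h S) ?_
      rw [CsetH, if_neg hb]
      rintro _ ⟨d, hd, rfl⟩
      have hnmem : etaMap hJ1inf d ∉ etaMap hJ1inf '' IndSet S := by
        rintro ⟨d', hd', he⟩
        exact hd (etaMap_injective hJ1inf he ▸ hd')
      have := hxS2 S _ (etaMap_mem hJ1inf d)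
      show xS S (etaMap hJ1inf d) = false
      cases hxx : xS S (etaMap hJ1inf d)
      · rfl
      · exact absurd (this.mp hxx) hnmem
  have hΨinj : Function.Injective Ψ := by
    intro h h' he
    funext S
    have h1 := hval h S
    have h2 := hval h' S
    rw [← h1, ← h2]
    have : pU X (UH hJ1inf h) = pU X (UH hJ1inf h') := congrArg Subtype.val he
    rw [this]
  -- cardinality
  rw [BinarySubshift.NonTame]
  have hle : Cardinal.mk (Set ℕ → Bool) ≤ Cardinal.mk ↥X.Ellis :=
    Cardinal.mk_le_of_injective hΨinj
  have heq : Cardinal.mk (Set ℕ → Bool) = 2 ^ Cardinal.continuum := by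
    rw [← Cardinal.power_def, Cardinal.mk_bool, Cardinal.mk_set_nat]
  exact lt_of_lt_of_le (lt_of_lt_of_le (Cardinal.cantor _) (le_of_eq heq.symm)) hle

end Easy2

/-- A binary subshift is non-tame iff the pair of cylinders
`(A₀, A₁)` admits an infinite independence set. -/
theorem subshift_nontame_iff_independence (X : BinarySubshift) :
    X.NonTame ↔ ∃ Jset : Set ℕ, Jset.Infinite ∧
      IsIndependenceSet X.carrier
        {x ∈ X.carrier | x 0 = false} {x ∈ X.carrier | x 0 = true} Jset := by
  constructor
  · exact nontame_to_indep X
  · rintro ⟨J, hJinf, hind⟩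
    exact indep_to_nontame X hJinf hind
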